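/- Let w : ℝ → ℝ be continuous on [h₂, π] satisfying w(x) = (1/θ) A cos(μ(x - h₂)) + (B/(μθ)) sin(μ(x - h₂)) - (1/μ) ∫_{h₂}^x q(τ) sin(μ(x - τ)) w(g(τ)) dτ for x ∈ [h₂, π], where g maps [h₂, π] into [h₂, π], |A| ≤ 8√2/|δ|, |B|/μ ≤ 8√2/|δ|, q continuous with ∫_{h₂}^π |q| = q₃, θ, δ ≠ 0. If μ ≥ 2q₃ and μ > 0, then |w(x)| ≤ 32√2/(|δθ|) for all x ∈ [h₂, π]. -/

import Mathlib

theorem stmt_19 (h₂ μ q₃ A B θ δ : ℝ) (q g w : ℝ → ℝ)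
    (hh : h₂ < Real.pi) (hθ : θ ≠ 0) (hδ : δ ≠ 0)
    (hwcont : ContinuousOn w (Set.Icc h₂ Real.pi))
    (hqcont : ContinuousOn q (Set.Icc h₂ Real.pi))
    (hq₃ : q₃ = ∫ τ in h₂..Real.pi, |q τ|)
    (hg : ∀ τ ∈ Set.Icc h₂ Real.pi, g τ ∈ Set.Icc h₂ Real.pi)
    (hA : |A| ≤ 8 * Real.sqrt 2 / |δ|)
    (hB : |B| / μ ≤ 8 * Real.sqrt 2 / |δ|)
    (heq : ∀ x ∈ Set.Icc h₂ Real.pi,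
      w x = (1 / θ) * A * Real.cos (μ * (x - h₂))
        + (B / (μ * θ)) * Real.sin (μ * (x - h₂))
        - (1 / μ) * ∫ τ in h₂..x, q τ * Real.sin (μ * (x - τ)) * w (g τ))
    (hμq : μ ≥ 2 * q₃) (hμ : 0 < μ) :
    ∀ x ∈ Set.Icc h₂ Real.pi, |w x| ≤ 32 * Real.sqrt 2 / |δ * θ| := by
  have hδ' : (0:ℝ) < |δ| := abs_pos.mpr hδ
  have hθ' : (0:ℝ) < |θ| := abs_pos.mpr hθ
  have hne : (Set.Icc h₂ Real.pi).Nonempty := Set.nonempty_Icc.mpr hh.le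
  obtain ⟨c, hc, hmax⟩ := isCompact_Icc.exists_isMaxOn hne hwcont.abs
  set M := |w c| with hMdef
  have hM0 : (0:ℝ) ≤ M := abs_nonneg _
  have hq₃0 : (0:ℝ) ≤ q₃ :=
    hq₃ ▸ intervalIntegral.integral_nonneg hh.le (fun τ _ => abs_nonneg _)
  have hqintpi : IntervalIntegrable (fun τ => |q τ|) MeasureTheory.volume h₂ Real.pi :=
    (hqcont.abs).intervalIntegrable_of_Icc hh.le
  have hIq : (∫ τ in h₂..c, |q τ|) ≤ q₃ := by
    rw [hq₃]
    exact intervalIntegral.integral_mono_interval le_rfl hc.1 hc.2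
      (Filter.Eventually.of_forall fun τ => abs_nonneg _) hqintpi
  have hIqnn : (0:ℝ) ≤ ∫ τ in h₂..c, |q τ| :=
    intervalIntegral.integral_nonneg hc.1 (fun τ _ => abs_nonneg _)
  have hI : |∫ τ in h₂..c, q τ * Real.sin (μ * (c - τ)) * w (g τ)| ≤ q₃ * M := by
    have hint : IntervalIntegrable (fun τ => |q τ| * M) MeasureTheory.volume h₂ c :=
      (((hqcont.mono (Set.Icc_subset_Icc le_rfl hc.2)).abs).intervalIntegrable_of_Icc
        hc.1).mul_const M
    have hb : ‖∫ τ in h₂..c, q τ * Real.sin (μ * (c - τ)) * w (g τ)‖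
        ≤ |∫ τ in h₂..c, |q τ| * M| := by
      apply intervalIntegral.norm_integral_le_abs_of_norm_le _ hint
      filter_upwards [MeasureTheory.ae_restrict_mem measurableSet_uIoc] with τ hτ
      have hτIcc : τ ∈ Set.Icc h₂ Real.pi := by
        rw [Set.uIoc_of_le hc.1] at hτ
        exact ⟨hτ.1.le, hτ.2.trans hc.2⟩
      have h1 : |w (g τ)| ≤ M := hmax (hg τ hτIcc)
      have h2 : |Real.sin (μ * (c - τ))| ≤ 1 := Real.abs_sin_le_one _
      calc ‖q τ * Real.sin (μ * (c - τ)) * w (g τ)‖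
          = |q τ| * |Real.sin (μ * (c - τ))| * |w (g τ)| := by
            rw [Real.norm_eq_abs, abs_mul, abs_mul]
        _ ≤ |q τ| * 1 * M := by gcongr
        _ = |q τ| * M := by ring
    have heqint : |∫ τ in h₂..c, |q τ| * M| = (∫ τ in h₂..c, |q τ|) * M := by
      rw [intervalIntegral.integral_mul_const, abs_of_nonneg (mul_nonneg hIqnn hM0)]
    rw [Real.norm_eq_abs] at hb
    calc |∫ τ in h₂..c, q τ * Real.sin (μ * (c - τ)) * w (g τ)|
        ≤ (∫ τ in h₂..c, |q τ|) * M := by rw [← heqint]; exact hb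
      _ ≤ q₃ * M := mul_le_mul_of_nonneg_right hIq hM0
  have hMineq : M ≤ 16 * Real.sqrt 2 / (|δ| * |θ|) + M / 2 := by
    have hwc := heq c hc
    have h1 : |(1 / θ) * A * Real.cos (μ * (c - h₂))| ≤ |A| / |θ| := by
      rw [abs_mul, abs_mul, abs_div, abs_one]
      calc 1 / |θ| * |A| * |Real.cos (μ * (c - h₂))| ≤ 1 / |θ| * |A| * 1 :=
            mul_le_mul_of_nonneg_left (Real.abs_cos_le_one _) (by positivity)
        _ = |A| / |θ| := by ring
    have h2 : |(B / (μ * θ)) * Real.sin (μ * (c - h₂))| ≤ |B| / μ / |θ| := by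
      rw [abs_mul, abs_div, abs_mul, abs_of_pos hμ]
      calc |B| / (μ * |θ|) * |Real.sin (μ * (c - h₂))| ≤ |B| / (μ * |θ|) * 1 :=
            mul_le_mul_of_nonneg_left (Real.abs_sin_le_one _) (by positivity)
        _ = |B| / μ / |θ| := by field_simp
    have h3 : |(1 / μ) * ∫ τ in h₂..c, q τ * Real.sin (μ * (c - τ)) * w (g τ)|
        ≤ (1 / μ) * (q₃ * M) := by
      rw [abs_mul, abs_div, abs_one, abs_of_pos hμ]
      exact mul_le_mul_of_nonneg_left hI (by positivity)
    have hAθ : |A| / |θ| ≤ 8 * Real.sqrt 2 / (|δ| * |θ|) := by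
      calc |A| / |θ| ≤ (8 * Real.sqrt 2 / |δ|) / |θ| := by gcongr
        _ = 8 * Real.sqrt 2 / (|δ| * |θ|) := by field_simp
    have hBθ : |B| / μ / |θ| ≤ 8 * Real.sqrt 2 / (|δ| * |θ|) := by
      calc |B| / μ / |θ| ≤ (8 * Real.sqrt 2 / |δ|) / |θ| := by gcongr
        _ = 8 * Real.sqrt 2 / (|δ| * |θ|) := by field_simp
    have h4 : (1 / μ) * (q₃ * M) ≤ M / 2 := by
      rw [div_mul_eq_mul_div, one_mul, div_le_div_iff₀ hμ (by norm_num : (0:ℝ) < 2)]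
      nlinarith
    calc M = |(1 / θ) * A * Real.cos (μ * (c - h₂))
          + (B / (μ * θ)) * Real.sin (μ * (c - h₂))
          - (1 / μ) * ∫ τ in h₂..c, q τ * Real.sin (μ * (c - τ)) * w (g τ)| := by
            rw [hMdef, hwc]
      _ ≤ |(1 / θ) * A * Real.cos (μ * (c - h₂))
          + (B / (μ * θ)) * Real.sin (μ * (c - h₂))|
          + |(1 / μ) * ∫ τ in h₂..c, q τ * Real.sin (μ * (c - τ)) * w (g τ)| :=
            abs_sub _ _
      _ ≤ |(1 / θ) * A * Real.cos (μ * (c - h₂))|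
          + |(B / (μ * θ)) * Real.sin (μ * (c - h₂))|
          + |(1 / μ) * ∫ τ in h₂..c, q τ * Real.sin (μ * (c - τ)) * w (g τ)| := by
            gcongr
            exact abs_add_le _ _
      _ ≤ |A| / |θ| + |B| / μ / |θ| + (1 / μ) * (q₃ * M) := by gcongr
      _ ≤ 8 * Real.sqrt 2 / (|δ| * |θ|) + 8 * Real.sqrt 2 / (|δ| * |θ|) + M / 2 := by
            gcongr
      _ = 16 * Real.sqrt 2 / (|δ| * |θ|) + M / 2 := by ring
  have hMfinal : M ≤ 32 * Real.sqrt 2 / (|δ| * |θ|) := by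
    have : 32 * Real.sqrt 2 / (|δ| * |θ|) = 2 * (16 * Real.sqrt 2 / (|δ| * |θ|)) := by
      ring
    rw [this]
    linarith
  intro x hx
  calc |w x| ≤ M := hmax hx
    _ ≤ 32 * Real.sqrt 2 / (|δ| * |θ|) := hMfinal
    _ = 32 * Real.sqrt 2 / |δ * θ| := by rw [abs_mul]
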